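/- Let a > 0 and suppose r : [0, τ] → (0, ∞) is continuous on [0, τ], differentiable on (0, τ), with r(τ) ≥ 0 allowed to vanish, and suppose there are constants c, C > 0 such that r(t) ≥ c·(τ − t)^{1/(1+a)} and ṙ(t) ≥ −2 r(t)^{−a} − C and ṙ(t) ≤ −2 r(t)^{−a} + 2 s₁(t)^{−a} + 2 s₂(t)^{−a} + C for functions s₁, s₂ ≥ c·(τ−t)^{1/(1+a)}. Then there is C' > 0 with |ṙ(t)| ≤ C'·(τ − t)^{−a/(1+a)} on (0, τ), and hence r ∈ C^{1/(1+a)}([0, τ]). -/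

import Mathlib

open Real Set

lemma rpow_subadd' {x y p : ℝ} (hx : 0 ≤ x) (hy : 0 ≤ y) (hp0 : 0 < p) (hp1 : p ≤ 1) :
    (x + y) ^ p ≤ x ^ p + y ^ p := by
  lift x to NNReal using hx
  lift y to NNReal using hy
  have h := NNReal.rpow_add_rpow_le x y hp0 hp1
  simp only [NNReal.rpow_one, one_div_one] at h
  have h2 := NNReal.rpow_le_rpow h hp0.le
  rw [← NNReal.rpow_mul, one_div, inv_mul_cancel₀ hp0.ne', NNReal.rpow_one] at h2
  exact_mod_cast h2

theorem stmt16 (a τ c C : ℝ) (ha : 0 < a) (hc : 0 < c) (hC : 0 < C) (hτ : 0 < τ)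
    (r s₁ s₂ : ℝ → ℝ)
    (hpos : ∀ t ∈ Set.Ico (0:ℝ) τ, 0 < r t) (hend : 0 ≤ r τ)
    (hcont : ContinuousOn r (Set.Icc 0 τ))
    (hdiff : ∀ t ∈ Set.Ioo (0:ℝ) τ, DifferentiableAt ℝ r t)
    (hrlb : ∀ t ∈ Set.Ioo (0:ℝ) τ, r t ≥ c * (τ - t) ^ ((1:ℝ)/(1+a)))
    (hs₁ : ∀ t ∈ Set.Ioo (0:ℝ) τ, s₁ t ≥ c * (τ - t) ^ ((1:ℝ)/(1+a)))
    (hs₂ : ∀ t ∈ Set.Ioo (0:ℝ) τ, s₂ t ≥ c * (τ - t) ^ ((1:ℝ)/(1+a)))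
    (hdlb : ∀ t ∈ Set.Ioo (0:ℝ) τ, deriv r t ≥ -2 * r t ^ (-a) - C)
    (hdub : ∀ t ∈ Set.Ioo (0:ℝ) τ,
      deriv r t ≤ -2 * r t ^ (-a) + 2 * s₁ t ^ (-a) + 2 * s₂ t ^ (-a) + C) :
    ∃ C' > 0,
      (∀ t ∈ Set.Ioo (0:ℝ) τ, |deriv r t| ≤ C' * (τ - t) ^ (-(a/(1+a)))) ∧
      (∀ s ∈ Set.Icc (0:ℝ) τ, ∀ t ∈ Set.Icc (0:ℝ) τ,
        |r t - r s| ≤ C' * |t - s| ^ ((1:ℝ)/(1+a))) := by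
  have h1a : (0:ℝ) < 1 + a := by linarith
  set β : ℝ := 1 / (1 + a) with hβdef
  set α : ℝ := a / (1 + a) with hαdef
  have hβpos : 0 < β := by positivity
  have hβle1 : β ≤ 1 := by
    rw [hβdef, div_le_one h1a]; linarith
  have hβ1 : β - 1 = -α := by
    rw [hβdef, hαdef]; field_simp; ring
  have hca : (0:ℝ) < c ^ (-a) := rpow_pos_of_pos hc _
  have hτα : (0:ℝ) < τ ^ α := rpow_pos_of_pos hτ _
  set K : ℝ := 4 * c ^ (-a) + C * τ ^ α with hKdef
  have hK : 0 < K := by positivity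
  set C' : ℝ := K * (1 + a) with hC'def
  have hC' : 0 < C' := by positivity
  have hKC' : K ≤ C' := by
    rw [hC'def]; nlinarith
  -- derivative bound
  have hder : ∀ t ∈ Set.Ioo (0:ℝ) τ, |deriv r t| ≤ K * (τ - t) ^ (-α) := by
    intro t ht
    obtain ⟨ht0, htτ⟩ := ht
    have hτt : 0 < τ - t := by linarith
    have hp : 0 < (τ - t) ^ β := rpow_pos_of_pos hτt _
    have hD : 0 < (τ - t) ^ (-α) := rpow_pos_of_pos hτt _
    have hpow : ((τ - t) ^ β) ^ (-a) = (τ - t) ^ (-α) := by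
      rw [← Real.rpow_mul hτt.le]
      congr 1
      rw [hβdef, hαdef]; field_simp
    have key : ∀ x : ℝ, c * (τ - t) ^ β ≤ x → x ^ (-a) ≤ c ^ (-a) * (τ - t) ^ (-α) := by
      intro x hx
      have h1 : x ^ (-a) ≤ (c * (τ - t) ^ β) ^ (-a) :=
        Real.rpow_le_rpow_of_nonpos (by positivity) hx (by linarith)
      calc x ^ (-a) ≤ (c * (τ - t) ^ β) ^ (-a) := h1
        _ = c ^ (-a) * ((τ - t) ^ β) ^ (-a) := Real.mul_rpow hc.le hp.le
        _ = c ^ (-a) * (τ - t) ^ (-α) := by rw [hpow]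
    have hA1 : r t ^ (-a) ≤ c ^ (-a) * (τ - t) ^ (-α) := key _ (hrlb t ⟨ht0, htτ⟩)
    have hA2 : s₁ t ^ (-a) ≤ c ^ (-a) * (τ - t) ^ (-α) := key _ (hs₁ t ⟨ht0, htτ⟩)
    have hA3 : s₂ t ^ (-a) ≤ c ^ (-a) * (τ - t) ^ (-α) := key _ (hs₂ t ⟨ht0, htτ⟩)
    have hrpos : 0 < r t := hpos t ⟨ht0.le, htτ⟩
    have hA5 : 0 ≤ r t ^ (-a) := (rpow_pos_of_pos hrpos _).le
    have hA4 : C ≤ C * τ ^ α * (τ - t) ^ (-α) := by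
      have h1 : τ ^ (-α) ≤ (τ - t) ^ (-α) :=
        Real.rpow_le_rpow_of_nonpos hτt (by linarith) (neg_nonpos.mpr (by rw [hαdef]; positivity))
      have h2 : τ ^ α * τ ^ (-α) = 1 := by
        rw [← Real.rpow_add hτ]; simp
      calc C = C * (τ ^ α * τ ^ (-α)) := by rw [h2, mul_one]
        _ = C * τ ^ α * τ ^ (-α) := by ring
        _ ≤ C * τ ^ α * (τ - t) ^ (-α) := by
            apply mul_le_mul_of_nonneg_left h1 (by positivity)
    have hKD : K * (τ - t) ^ (-α) =
        4 * (c ^ (-a) * (τ - t) ^ (-α)) + C * τ ^ α * (τ - t) ^ (-α) := by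
      rw [hKdef]; ring
    rw [abs_le]
    constructor
    · have := hdlb t ⟨ht0, htτ⟩
      rw [hKD]
      have hcD : 0 ≤ c ^ (-a) * (τ - t) ^ (-α) := by positivity
      linarith
    · have := hdub t ⟨ht0, htτ⟩
      rw [hKD]
      linarith
  refine ⟨C', hC', ?_, ?_⟩
  · intro t ht
    have hτt : 0 < τ - t := by linarith [ht.2]
    have hD : 0 < (τ - t) ^ (-(a/(1+a))) := rpow_pos_of_pos hτt _
    calc |deriv r t| ≤ K * (τ - t) ^ (-α) := hder t ht
      _ ≤ C' * (τ - t) ^ (-(a/(1+a))) := by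
          rw [hαdef]; exact mul_le_mul_of_nonneg_right hKC' hD.le
  · -- Hölder estimate
    set G : ℝ → ℝ := fun t => -C' * (τ - t) ^ β with hGdef
    have hGderiv : ∀ t ∈ Set.Ioo (0:ℝ) τ, HasDerivAt G (K * (τ - t) ^ (-α)) t := by
      intro t ht
      have hτt : 0 < τ - t := by linarith [ht.2]
      have h1 : HasDerivAt (fun x : ℝ => τ - x) (-1) t := by
        simpa using (hasDerivAt_id t).const_sub τ
      have h2 := h1.rpow_const (p := β) (Or.inl hτt.ne')
      have h3 := h2.const_mul (-C')
      refine h3.congr_deriv ?_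
      rw [hβ1, hC'def, hβdef]
      field_simp
    have hGcont : ContinuousOn G (Set.Icc 0 τ) := by
      apply continuousOn_const.mul
      exact ((continuous_const.sub continuous_id).continuousOn).rpow_const
        (fun x _ => Or.inr hβpos.le)
    have hmono : ∀ (ε : ℝ), ε = 1 ∨ ε = -1 →
        MonotoneOn (fun t => G t + ε * r t) (Set.Icc 0 τ) := by
      intro ε hε
      apply monotoneOn_of_deriv_nonneg (convex_Icc 0 τ)
        (hGcont.add (continuousOn_const.mul hcont))
      · intro t ht
        rw [interior_Icc] at ht
        exact (((hGderiv t ht).add (((hdiff t ht).hasDerivAt).const_mul ε)).differentiableAt).differentiableWithinAt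
      · intro t ht
        rw [interior_Icc] at ht
        have h := ((hGderiv t ht).add (((hdiff t ht).hasDerivAt).const_mul ε)).deriv
        rw [show deriv (G + (fun x => ε) * r) t = K * (τ - t) ^ (-α) + ε * deriv r t from h]
        have habs := hder t ht
        rw [abs_le] at habs
        rcases hε with rfl | rfl <;> simp <;> linarith [habs.1, habs.2]
    have hmain : ∀ s ∈ Set.Icc (0:ℝ) τ, ∀ t ∈ Set.Icc (0:ℝ) τ, s ≤ t →
        |r t - r s| ≤ C' * (t - s) ^ β := by
      intro s hs t ht hst
      have h1 := hmono 1 (Or.inl rfl) hs ht hst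
      have h2 := hmono (-1) (Or.inr rfl) hs ht hst
      simp only [one_mul, neg_one_mul] at h1 h2
      have hGG : G t - G s ≤ C' * (t - s) ^ β := by
        have hτt : 0 ≤ τ - t := by linarith [ht.2]
        have hts : 0 ≤ t - s := by linarith
        have hsub : (τ - s) ^ β ≤ (τ - t) ^ β + (t - s) ^ β := by
          have : τ - s = (τ - t) + (t - s) := by ring
          rw [this]
          exact rpow_subadd' hτt hts hβpos hβle1
        have : G t - G s = C' * ((τ - s) ^ β - (τ - t) ^ β) := by
          rw [hGdef]; ring
        rw [this]
        have := mul_le_mul_of_nonneg_left (by linarith : (τ - s) ^ β - (τ - t) ^ β ≤ (t - s) ^ β) hC'.le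
        linarith
      rw [abs_sub_le_iff]
      constructor <;> linarith
    intro s hs t ht
    rcases le_total s t with h | h
    · have := hmain s hs t ht h
      rwa [abs_of_nonneg (by linarith : (0:ℝ) ≤ t - s)]
    · have := hmain t ht s hs h
      rw [abs_sub_comm (r t) (r s), abs_sub_comm t s, abs_of_nonneg (by linarith : (0:ℝ) ≤ s - t)]
      exact this
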